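/- Fix k ≥ 2, 0 ≤ a ≤ k-1, and 1 ≤ r ≤ k-1. The number F^{k,a,r}_{n,m} of generalized (k,r)-Fine paths of depth a, semilength n, and semiheight m satisfies, for n ≥ 1: if m ≥ 1 then F^{k,a,r}_{n,m} = Σ_{j=0}^{k} C(k,j)·F^{k,a,r}_{n-1,m-1+j}, and if m = 0 then F^{k,a,r}_{n,0} = Σ_{j=1}^{k} (C(k,j) - C(k-a-1,j) - C(k-r-1,j-1)) · F^{k,a,r}_{n-1,j-1}. -/

import Mathlib

open Finset PowerSeries

/-- The set of generalized `k`-Dyck paths of depth `a`, semilength `n` and semiheight `m`: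
lattice paths from `(0,0)` to `(k*n, k*m)` using steps `U = (1,1)` and `D_{k-1} = (1,1-k)`
that stay weakly above the line `y = -a`, encoded as lists of vertical displacements. -/
def DyckSet (k a n m : ℕ) : Set (List ℤ) :=
  {L | L.length = k * n ∧ L.sum = (k : ℤ) * m ∧
    (∀ s ∈ L, s = 1 ∨ s = 1 - (k : ℤ)) ∧
    ∀ i, -(a : ℤ) ≤ (L.take i).sum}

/-- `D k a n m` is the number of generalized `k`-Dyck paths of depth `a`,
semilength `n` and semiheight `m`. -/
noncomputable def D (k a n m : ℕ) : ℕ := Nat.card (DyckSet k a n m)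

/-- `HasHill k r L` holds when the path `L` contains a subpath `U^r D_{k-1}`
(`r` consecutive up steps followed by one maximal down step) ending at height `0`. -/
def HasHill (k r : ℕ) (L : List ℤ) : Prop :=
  ∃ i, i + r < L.length ∧ (∀ j < r, L.getD (i + j) 0 = 1) ∧
    L.getD (i + r) 0 = 1 - (k : ℤ) ∧ (L.take (i + r + 1)).sum = 0

/-- `F k a r n m` is the number of generalized `(k,r)`-Fine paths of depth `a`,
semilength `n` and semiheight `m`: generalized `k`-Dyck paths with no subpath
`U^r D_{k-1}` ending at height `0`. -/
noncomputable def F (k a r n m : ℕ) : ℕ :=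
  Nat.card {L | L ∈ DyckSet k a n m ∧ ¬ HasHill k r L}

attribute [local instance] Classical.propDecidable

namespace FineAux

/-- the length-`k` suffix with down-steps at positions in `s`. -/
noncomputable def toList (k : ℕ) (s : Finset (Fin k)) : List ℤ :=
  List.ofFn (fun i => if i ∈ s then 1 - (k:ℤ) else 1)

/-- number of down steps among the first `p` positions. -/
def dcount {k : ℕ} (s : Finset (Fin k)) (p : ℕ) : ℕ := #(s.filter (fun i : Fin k => (i:ℕ) < p))

lemma length_toList (k : ℕ) (s : Finset (Fin k)) : (toList k s).length = k := by
  simp [toList]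

lemma getD_toList {k : ℕ} (s : Finset (Fin k)) {p : ℕ} (hp : p < k) :
    (toList k s).getD p 0 = if (⟨p, hp⟩ : Fin k) ∈ s then 1 - (k:ℤ) else 1 := by
  rw [toList, List.getD_eq_getElem _ _ (by simpa using hp)]
  simp

lemma mem_toList {k : ℕ} (s : Finset (Fin k)) {x : ℤ} (hx : x ∈ toList k s) :
    x = 1 ∨ x = 1 - (k:ℤ) := by
  rw [toList, List.mem_ofFn] at hx
  obtain ⟨i, hi⟩ := hx
  by_cases h : i ∈ s <;> simp [h] at hi <;> omega

lemma dcount_le {k : ℕ} (s : Finset (Fin k)) (p : ℕ) : dcount s p ≤ s.card :=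
  Finset.card_filter_le _ _

lemma dcount_of_ge {k : ℕ} (s : Finset (Fin k)) {p : ℕ} (hp : k ≤ p) : dcount s p = s.card := by
  unfold dcount
  rw [Finset.filter_true_of_mem]
  intro i _
  exact lt_of_lt_of_le i.isLt hp

lemma dcount_succ {k : ℕ} (s : Finset (Fin k)) {p : ℕ} (hp : p < k) :
    dcount s (p + 1) = dcount s p + (if (⟨p, hp⟩ : Fin k) ∈ s then 1 else 0) := by
  unfold dcount
  by_cases hm : (⟨p, hp⟩ : Fin k) ∈ s
  · rw [if_pos hm]
    have he : s.filter (fun i : Fin k => (i:ℕ) < p + 1) =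
        insert ⟨p, hp⟩ (s.filter (fun i : Fin k => (i:ℕ) < p)) := by
      ext i
      simp only [Finset.mem_filter, Finset.mem_insert]
      constructor
      · rintro ⟨his, hlt⟩
        rcases Nat.lt_or_ge (i : ℕ) p with h | h
        · exact Or.inr ⟨his, h⟩
        · exact Or.inl (Fin.ext (show (i:ℕ) = p by omega))
      · rintro (rfl | ⟨his, hlt⟩)
        · exact ⟨hm, show p < p + 1 from Nat.lt_succ_self p⟩
        · exact ⟨his, by omega⟩
    rw [he, Finset.card_insert_of_notMem (by simp)]
  · rw [if_neg hm]
    have he : s.filter (fun i : Fin k => (i:ℕ) < p + 1) = s.filter (fun i : Fin k => (i:ℕ) < p) := by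
      ext i
      simp only [Finset.mem_filter]
      constructor
      · rintro ⟨his, hlt⟩
        refine ⟨his, ?_⟩
        rcases Nat.lt_or_ge (i : ℕ) p with h | h
        · exact h
        · have : i = (⟨p, hp⟩ : Fin k) := Fin.ext (show (i:ℕ) = p by omega)
          exact absurd (this ▸ his) hm
      · rintro ⟨his, hlt⟩; exact ⟨his, by omega⟩
    rw [he]; omega

lemma sum_take_toList {k : ℕ} (s : Finset (Fin k)) :
    ∀ p, p ≤ k → ((toList k s).take p).sum = (p:ℤ) - (k:ℤ) * (dcount s p : ℤ)
  | 0, _ => by simp [dcount]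
  | (p+1), hp => by
    have hpk : p < k := hp
    have hlen : p < (toList k s).length := by rw [length_toList]; exact hpk
    rw [List.sum_take_succ _ _ hlen, sum_take_toList s p (by omega), dcount_succ s hpk]
    have : (toList k s)[p] = if (⟨p, hpk⟩ : Fin k) ∈ s then 1 - (k:ℤ) else 1 := by
      rw [← List.getD_eq_getElem _ 0 hlen, getD_toList s hpk]
    rw [this]
    by_cases hm : (⟨p, hpk⟩ : Fin k) ∈ s <;> simp [hm] <;> push_cast <;> ring

lemma sum_toList {k : ℕ} (s : Finset (Fin k)) :
    (toList k s).sum = (k:ℤ) - (k:ℤ) * (s.card : ℤ) := by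
  have h1 : (toList k s).take k = toList k s :=
    List.take_of_length_le (by rw [length_toList])
  have := sum_take_toList s k le_rfl
  rw [h1, dcount_of_ge s le_rfl] at this
  exact this

lemma toList_inj {k : ℕ} (hk : 1 ≤ k) {s t : Finset (Fin k)}
    (h : toList k s = toList k t) : s = t := by
  have h2 := List.ofFn_injective h
  ext i
  have := congrFun h2 i
  by_cases hs : i ∈ s <;> by_cases ht : i ∈ t <;> simp [hs, ht] at this ⊢
  · omega
  · omega

lemma eq_toList {k : ℕ} (hk : 1 ≤ k) (L : List ℤ) (hlen : L.length = k)
    (hent : ∀ x ∈ L, x = 1 ∨ x = 1 - (k:ℤ)) : ∃ s, L = toList k s := by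
  refine ⟨Finset.univ.filter (fun i : Fin k => L.getD (i : ℕ) 0 = 1 - (k:ℤ)), ?_⟩
  apply List.ext_getElem (by simp [hlen, length_toList])
  intro i h1 h2
  have hik : i < k := by omega
  have hgd : L.getD i 0 = L[i] := List.getD_eq_getElem _ _ h1
  rw [← List.getD_eq_getElem _ 0 h2, getD_toList _ hik]
  have hmem_iff : ((⟨i, hik⟩ : Fin k) ∈
      Finset.univ.filter (fun i : Fin k => L.getD (i : ℕ) 0 = 1 - (k:ℤ))) ↔ L[i] = 1 - (k:ℤ) := by
    simp only [Finset.mem_filter, Finset.mem_univ, true_and]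
    rw [hgd]
  by_cases hmem : (⟨i, hik⟩ : Fin k) ∈
      Finset.univ.filter (fun i : Fin k => L.getD (i : ℕ) 0 = 1 - (k:ℤ))
  · rw [if_pos hmem]
    exact hmem_iff.mp hmem
  · rw [if_neg hmem]
    rcases hent L[i] (L.getElem_mem h1) with h | h
    · exact h
    · exact absurd (hmem_iff.mpr h) hmem

/-- all lists of a given length with entries `1` or `1 - k`. -/
noncomputable def allL (k : ℕ) : ℕ → Finset (List ℤ)
  | 0 => {([] : List ℤ)}
  | (N+1) => (allL k N).biUnion fun L => {L ++ [1], L ++ [1 - (k:ℤ)]}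

lemma mem_allL {k N : ℕ} {L : List ℤ} :
    L ∈ allL k N ↔ L.length = N ∧ ∀ x ∈ L, x = 1 ∨ x = 1 - (k:ℤ) := by
  induction N generalizing L with
  | zero =>
    simp only [allL, Finset.mem_singleton]
    constructor
    · rintro rfl; exact ⟨rfl, by simp⟩
    · rintro ⟨h, _⟩; exact List.eq_nil_of_length_eq_zero h
  | succ N ih =>
    simp only [allL, Finset.mem_biUnion, Finset.mem_insert, Finset.mem_singleton]
    constructor
    · rintro ⟨P, hP, (rfl | rfl)⟩ <;> obtain ⟨hl, he⟩ := ih.mp hP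
      · refine ⟨by simp [hl], ?_⟩
        intro x hx
        rcases List.mem_append.mp hx with h | h
        · exact he x h
        · left; simpa using h
      · refine ⟨by simp [hl], ?_⟩
        intro x hx
        rcases List.mem_append.mp hx with h | h
        · exact he x h
        · right; simpa using h
    · rintro ⟨hl, he⟩
      have hne : L ≠ [] := by intro h; rw [h] at hl; simp at hl
      refine ⟨L.dropLast, ih.mpr ⟨by simp [hl], ?_⟩, ?_⟩
      · intro x hx
        exact he x (List.dropLast_subset L hx)
      · rcases he (L.getLast hne) (List.getLast_mem hne) with h | h
        · left; rw [← h, List.dropLast_append_getLast]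
        · right; rw [← h, List.dropLast_append_getLast]

lemma F_eq (k a r n m : ℕ) :
    F k a r n m = #((allL k (k*n)).filter (fun L => L ∈ DyckSet k a n m ∧ ¬ HasHill k r L)) := by
  rw [F]
  have hset : {L | L ∈ DyckSet k a n m ∧ ¬ HasHill k r L} =
      ↑((allL k (k*n)).filter (fun L => L ∈ DyckSet k a n m ∧ ¬ HasHill k r L)) := by
    ext L
    simp only [Set.mem_setOf_eq, Finset.coe_filter, mem_allL]
    constructor
    · rintro ⟨hd, hh⟩
      exact ⟨⟨hd.1, hd.2.2.1⟩, hd, hh⟩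
    · rintro ⟨_, hd, hh⟩; exact ⟨hd, hh⟩
  rw [hset, Nat.card_coe_set_eq, Set.ncard_coe_finset]

lemma decomp {k : ℕ} (hk : 1 ≤ k) (M : ℕ) (cond : List ℤ → Prop) :
    #((allL k (M + k)).filter cond) =
      ∑ s : Finset (Fin k), #((allL k M).filter (fun P => cond (P ++ toList k s))) := by
  have himg : (allL k (M + k)).filter cond =
      (univ : Finset (Finset (Fin k))).biUnion (fun s =>
        ((allL k M).filter (fun P => cond (P ++ toList k s))).image
          (fun P => P ++ toList k s)) := by
    ext L
    simp only [Finset.mem_filter, Finset.mem_biUnion, Finset.mem_univ, Finset.mem_image,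
      true_and]
    constructor
    · rintro ⟨hL, hc⟩
      rw [mem_allL] at hL
      obtain ⟨hl, he⟩ := hL
      have lenP : (L.take M).length = M := by simp [hl]
      have lenS : (L.drop M).length = k := by simp [hl]
      obtain ⟨s, hs⟩ := eq_toList hk (L.drop M) lenS
        (fun x hx => he x (List.drop_subset _ _ hx))
      have hPS : L.take M ++ toList k s = L := by
        rw [← hs]; exact List.take_append_drop M L
      refine ⟨s, L.take M, ⟨?_, by rw [hPS]; exact hc⟩, hPS⟩
      rw [mem_allL]
      exact ⟨lenP, fun x hx => he x (List.take_subset _ _ hx)⟩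
    · rintro ⟨s, P, ⟨hP, hc⟩, rfl⟩
      rw [mem_allL] at hP ⊢
      refine ⟨⟨by simp [hP.1, length_toList], ?_⟩, hc⟩
      intro x hx
      rcases List.mem_append.mp hx with h | h
      · exact hP.2 x h
      · exact mem_toList s h
  rw [himg, Finset.card_biUnion]
  · apply Finset.sum_congr rfl
    intro s _
    apply Finset.card_image_of_injOn
    intro P _ Q _ h
    exact List.append_cancel_right h
  · intro s _ t _ hst
    rw [Function.onFun, Finset.disjoint_left]
    rintro L hLs hLt
    obtain ⟨P, hP, rfl⟩ := Finset.mem_image.mp hLs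
    obtain ⟨Q, hQ, hQe⟩ := Finset.mem_image.mp hLt
    have lenP : P.length = M := (mem_allL.mp (Finset.mem_filter.mp hP).1).1
    have lenQ : Q.length = M := (mem_allL.mp (Finset.mem_filter.mp hQ).1).1
    have e1 : (P ++ toList k s).drop M = toList k s := by
      rw [← lenP]; exact List.drop_left
    have e2 : (Q ++ toList k t).drop M = toList k t := by
      rw [← lenQ]; exact List.drop_left
    have h1 : toList k s = toList k t := by rw [← e1, ← hQe, e2]
    exact hst (toList_inj hk h1)

def Pattern (k r : ℕ) (s : Finset (Fin k)) : Prop :=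
  (∃ i ∈ s, (i:ℕ) = k - 1) ∧ ∀ i ∈ s, (i:ℕ) < k - 1 - r ∨ (i:ℕ) = k - 1

def Good (k a r m : ℕ) (s : Finset (Fin k)) : Prop :=
  1 ≤ m + s.card ∧
  (∀ p : ℕ, p ≤ k →
    -(a:ℤ) ≤ (k:ℤ) * ((m:ℤ) + (s.card:ℤ) - 1) + (p:ℤ) - (k:ℤ) * (dcount s p : ℤ)) ∧
  ¬(m = 0 ∧ Pattern k r s)

lemma key {k a r : ℕ} (hk : 2 ≤ k) (ha : a ≤ k - 1) (hr1 : 1 ≤ r) (hr2 : r ≤ k - 1)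
    (n' m : ℕ) (s : Finset (Fin k)) (P : List ℤ) (hP : P ∈ allL k (k * n')) :
    ((P ++ toList k s) ∈ DyckSet k a (n'+1) m ∧ ¬ HasHill k r (P ++ toList k s)) ↔
      (Good k a r m s ∧ (P ∈ DyckSet k a n' (m + s.card - 1) ∧ ¬ HasHill k r P)) := by
  obtain ⟨lenP, entP⟩ := mem_allL.mp hP
  set M := k * n' with hM
  set c := s.card with hc
  set L := P ++ toList k s with hL
  have lenL : L.length = M + k := by
    rw [hL, List.length_append, lenP, length_toList]
  have take_le : ∀ i, i ≤ M → L.take i = P.take i := fun i hi =>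
    List.take_append_of_le_length (by omega)
  have take_M : L.take M = P := by
    rw [take_le M le_rfl, ← lenP, List.take_length]
  have take_ge : ∀ p : ℕ, L.take (M + p) = P ++ (toList k s).take p := fun p => by
    rw [hL, ← lenP]; exact List.take_length_add_append p
  have takesum_ge : ∀ p, p ≤ k →
      (L.take (M + p)).sum = P.sum + (p:ℤ) - (k:ℤ) * (dcount s p : ℤ) := by
    intro p hp
    rw [take_ge p, List.sum_append, sum_take_toList s p hp]; ring
  have getD_lt : ∀ i, i < M → L.getD i 0 = P.getD i 0 := fun i hi =>
    List.getD_append _ _ _ _ (by omega)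
  have getD_ge : ∀ p (hp : p < k),
      L.getD (M + p) 0 = if (⟨p, hp⟩ : Fin k) ∈ s then 1 - (k:ℤ) else 1 := by
    intro p hp
    rw [hL, List.getD_append_right _ _ _ _ (by omega),
      show M + p - P.length = p by omega, getD_toList s hp]
  have hLlen2 : L.length = k * (n' + 1) := by rw [lenL]; ring
  simp only [DyckSet, HasHill, Set.mem_setOf_eq, ← hL, lenP, ← hM]
  constructor
  · rintro ⟨⟨hlen, hsum, hent, hdep⟩, hnh⟩
    have hsum' : P.sum + ((k:ℤ) - k * c) = k * m := by
      rw [← sum_toList s, ← List.sum_append, ← hL]; exact hsum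
    have hg1 : 1 ≤ m + c := by
      by_contra hcon
      have hm0 : m = 0 := by omega
      have hc0 : c = 0 := by omega
      have hps : P.sum = -(k:ℤ) := by
        rw [hm0, hc0] at hsum'; push_cast at hsum'; linarith
      have h2 := hdep M
      rw [take_M, hps] at h2
      omega
    have hPsum : P.sum = (k:ℤ) * ((m:ℤ) + c - 1) := by
      have he : (k:ℤ) * ((m:ℤ) + c - 1) = k * m - ((k:ℤ) - k * c) := by ring
      rw [he]; linarith
    have hPsum' : P.sum = (k:ℤ) * ((m + c - 1 : ℕ) : ℤ) := by
      rw [hPsum]; congr 1; omega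
    have hdepP : ∀ i, -(a:ℤ) ≤ (P.take i).sum := by
      intro i
      rcases le_or_gt i M with h | h
      · rw [← take_le i h]; exact hdep i
      · rw [List.take_of_length_le (by omega), ← take_M]
        exact hdep M
    have hdep2 : ∀ p : ℕ, p ≤ k →
        -(a:ℤ) ≤ (k:ℤ) * ((m:ℤ) + c - 1) + p - k * (dcount s p : ℤ) := by
      intro p hp
      have h2 := hdep (M + p)
      rw [takesum_ge p hp, hPsum] at h2
      linarith
    have hnhP : ¬ ∃ i, i + r < M ∧ (∀ j < r, P.getD (i + j) 0 = 1) ∧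
        P.getD (i + r) 0 = 1 - (k:ℤ) ∧ (List.take (i + r + 1) P).sum = 0 := by
      rintro ⟨i, hi, hup, hdn, hsz⟩
      exact hnh ⟨i, by rw [lenL]; omega,
        fun j hj => by rw [getD_lt _ (by omega)]; exact hup j hj,
        by rw [getD_lt _ (by omega)]; exact hdn,
        by rw [take_le _ (by omega)]; exact hsz⟩
    have hg3 : ¬ (m = 0 ∧ Pattern k r s) := by
      rintro ⟨hm0, ⟨i0, hi0s, hi0v⟩, hpat⟩
      apply hnh
      refine ⟨M + (k - 1 - r), by rw [lenL]; omega, ?_, ?_, ?_⟩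
      · intro j hj
        have hq : k - 1 - r + j < k := by omega
        rw [show M + (k - 1 - r) + j = M + (k - 1 - r + j) by omega, getD_ge _ hq, if_neg]
        intro hmem
        have h5 : (k - 1 - r + j < k - 1 - r) ∨ (k - 1 - r + j = k - 1) := hpat _ hmem
        omega
      · have hmem : (⟨k - 1, by omega⟩ : Fin k) ∈ s := by
          have he : i0 = (⟨k - 1, by omega⟩ : Fin k) := Fin.ext hi0v
          exact he ▸ hi0s
        rw [show M + (k - 1 - r) + r = M + (k - 1) by omega, getD_ge _ (by omega), if_pos hmem]
      · rw [show M + (k - 1 - r) + r + 1 = M + k by omega, takesum_ge k le_rfl,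
          dcount_of_ge s le_rfl, hPsum, hm0, ← hc]
        push_cast
        ring
    exact ⟨⟨hg1, hdep2, hg3⟩, ⟨trivial, hPsum', entP, hdepP⟩, hnhP⟩
  · rintro ⟨⟨hg1, hg2, hg3⟩, ⟨_, hPsum', entP', hdepP⟩, hnhP⟩
    have hPsum : P.sum = (k:ℤ) * ((m:ℤ) + c - 1) := by
      rw [hPsum']; congr 1; omega
    have hsum : L.sum = (k:ℤ) * m := by
      rw [hL, List.sum_append, sum_toList, hPsum, ← hc]; ring
    have hent : ∀ x ∈ L, x = 1 ∨ x = 1 - (k:ℤ) := by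
      intro x hx
      rcases List.mem_append.mp hx with h | h
      · exact entP x h
      · exact mem_toList s h
    have hdep : ∀ i, -(a:ℤ) ≤ (L.take i).sum := by
      intro i
      rcases le_or_gt i M with h | h
      · rw [take_le i h]; exact hdepP i
      · have hmin : min (i - M) k ≤ k := min_le_right _ _
        have he : L.take i = L.take (M + min (i - M) k) := by
          rcases le_or_gt i (M + k) with h2 | h2
          · rw [show M + min (i - M) k = i by omega]
          · rw [List.take_of_length_le (by omega), List.take_of_length_le (by omega)]
        rw [he, takesum_ge _ hmin, hPsum]
        exact hg2 _ hmin
    refine ⟨⟨hLlen2, hsum, hent, hdep⟩, ?_⟩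
    rintro ⟨i, hi, hup, hdn, hsz⟩
    rw [lenL] at hi
    rcases lt_or_ge (i + r) M with h | h
    · exact hnhP ⟨i, h,
        fun j hj => by rw [← getD_lt _ (by omega)]; exact hup j hj,
        by rw [← getD_lt _ h]; exact hdn,
        by rw [← take_le _ (by omega)]; exact hsz⟩
    · have hpk : i + r - M < k := by omega
      set p := i + r - M with hp
      have hdn' := hdn
      rw [show i + r = M + p by omega, getD_ge p hpk] at hdn'
      have hps : (⟨p, hpk⟩ : Fin k) ∈ s := by
        by_contra hcon
        rw [if_neg hcon] at hdn'
        omega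
      have hsz' := hsz
      rw [show i + r + 1 = M + (p + 1) by omega, takesum_ge (p + 1) (by omega), hPsum] at hsz'
      set d := dcount s (p + 1) with hd
      have hd1 : 1 ≤ d := by
        have hmf : (⟨p, hpk⟩ : Fin k) ∈ s.filter (fun i : Fin k => (i:ℕ) < p + 1) :=
          Finset.mem_filter.mpr ⟨hps, show p < p + 1 from Nat.lt_succ_self p⟩
        exact Finset.card_pos.mpr ⟨_, hmf⟩
      have hdc : d ≤ c := dcount_le s (p + 1)
      have heq : (k:ℤ) * ((m:ℤ) + c - 1 - d) = -((p:ℤ) + 1) := by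
        have he : (k:ℤ) * ((m:ℤ) + c - 1 - d) = (k:ℤ) * ((m:ℤ) + c - 1) - k * d := by ring
        rw [he]; push_cast at hsz' ⊢; linarith
      have hk' : (2:ℤ) ≤ (k:ℤ) := by exact_mod_cast hk
      have hp1k : (p:ℤ) + 1 ≤ (k:ℤ) := by exact_mod_cast (show p + 1 ≤ k by omega)
      have ht : (m:ℤ) + c - 1 - d = -1 := by
        rcases lt_trichotomy ((m:ℤ) + c - 1 - d) (-1) with h1 | h1 | h1
        · exfalso
          have h2 : (m:ℤ) + c - 1 - d ≤ -2 := by omega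
          have h3 := mul_le_mul_of_nonneg_left h2 (by linarith : (0:ℤ) ≤ (k:ℤ))
          linarith
        · exact h1
        · exfalso
          have h2 : (0:ℤ) ≤ (m:ℤ) + c - 1 - d := by omega
          have h3 := mul_nonneg (by linarith : (0:ℤ) ≤ (k:ℤ)) h2
          linarith
      have hpk1 : p + 1 = k := by
        have h2 := heq
        rw [ht] at h2
        have h3 : (p:ℤ) + 1 = (k:ℤ) := by linarith
        exact_mod_cast h3
      have hm0 : m = 0 := by omega
      have hdcc : d = c := by omega
      apply hg3
      refine ⟨hm0, ⟨⟨p, hpk⟩, hps, show p = k - 1 by omega⟩, ?_⟩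
      intro i' hi's
      by_contra hcon
      push_neg at hcon
      obtain ⟨hc1, hc2⟩ := hcon
      have hq1 : k - 1 - r ≤ (i':ℕ) := by omega
      have hq2 : (i':ℕ) < k - 1 := by have := i'.isLt; omega
      have hj : (i':ℕ) - (k - 1 - r) < r := by omega
      have hmem : (⟨(i':ℕ), i'.isLt⟩ : Fin k) ∈ s := by
        have he : (⟨(i':ℕ), i'.isLt⟩ : Fin k) = i' := Fin.ext rfl
        rw [he]; exact hi's
      have h5 := hup ((i':ℕ) - (k - 1 - r)) hj
      rw [show i + ((i':ℕ) - (k - 1 - r)) = M + (i':ℕ) by omega,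
        getD_ge _ i'.isLt, if_pos hmem] at h5
      omega

lemma good_of_pos {k a r : ℕ} (m : ℕ) (hm : 1 ≤ m) (s : Finset (Fin k)) :
    Good k a r m s := by
  refine ⟨by omega, ?_, by rintro ⟨h, _⟩; omega⟩
  intro p hp
  have h1 : (dcount s p : ℤ) ≤ (s.card : ℤ) := by exact_mod_cast dcount_le s p
  have h2 : (1:ℤ) ≤ (m:ℤ) := by exact_mod_cast hm
  have h3 : (0:ℤ) ≤ (k:ℤ) := by positivity
  have h4 : (0:ℤ) ≤ (p:ℤ) := by positivity
  have h5 : (0:ℤ) ≤ (a:ℤ) := by positivity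
  nlinarith [mul_nonneg h3 (by linarith : (0:ℤ) ≤ (m:ℤ) + (s.card:ℤ) - 1 - (dcount s p : ℤ))]

lemma good_zero_iff {k a r : ℕ} (hk : 2 ≤ k) (ha : a ≤ k - 1) (s : Finset (Fin k)) :
    Good k a r 0 s ↔
      1 ≤ s.card ∧ ¬(∀ i ∈ s, (i:ℕ) < k - a - 1) ∧ ¬ Pattern k r s := by
  constructor
  · rintro ⟨h1, h2, h3⟩
    refine ⟨by omega, ?_, fun hp => h3 ⟨rfl, hp⟩⟩
    intro hall
    have hd := h2 (k - a - 1) (by omega)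
    have hdc : dcount s (k - a - 1) = s.card := by
      unfold dcount
      rw [Finset.filter_true_of_mem]
      intro i hi; exact hall i hi
    rw [hdc] at hd
    have hcast : ((k - a - 1 : ℕ) : ℤ) = (k:ℤ) - a - 1 := by omega
    rw [hcast] at hd
    push_cast at hd
    linarith
  · rintro ⟨hc, hnall, hnpat⟩
    refine ⟨by omega, ?_, by rintro ⟨_, hp⟩; exact hnpat hp⟩
    intro p hp
    push_neg at hnall
    obtain ⟨i0, hi0, hge⟩ := hnall
    have hdle : dcount s p ≤ s.card := dcount_le s p
    rcases lt_or_eq_of_le hdle with h | h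
    · have h1 : (dcount s p : ℤ) + 1 ≤ (s.card:ℤ) := by exact_mod_cast h
      have h3 : (0:ℤ) ≤ (k:ℤ) := by positivity
      have h4 : (0:ℤ) ≤ (a:ℤ) := by positivity
      have h5 : (0:ℤ) ≤ (p:ℤ) := by positivity
      push_cast
      nlinarith [mul_nonneg h3 (by linarith : (0:ℤ) ≤ (s.card:ℤ) - 1 - (dcount s p : ℤ))]
    · have hfe : s.filter (fun i : Fin k => (i:ℕ) < p) = s :=
        Finset.eq_of_subset_of_card_le (Finset.filter_subset _ _) (le_of_eq h.symm)
      have hall : ∀ i ∈ s, (i:ℕ) < p := by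
        intro i hi
        rw [← hfe] at hi
        exact (Finset.mem_filter.mp hi).2
      have hpge : k - a ≤ p := by
        have := hall i0 hi0; omega
      have hdcast : (dcount s p : ℤ) = (s.card : ℤ) := by exact_mod_cast h
      have h6 : (k:ℤ) - a ≤ (p:ℤ) := by omega
      push_cast
      rw [hdcast]
      nlinarith [h6]

lemma sum_finsets (k : ℕ) (f : Finset (Fin k) → ℕ) :
    ∑ s : Finset (Fin k), f s =
      ∑ j ∈ Finset.range (k + 1),
        ∑ s ∈ Finset.powersetCard j (Finset.univ : Finset (Fin k)), f s := by
  rw [← Finset.powerset_univ, Finset.sum_powerset, Finset.card_univ, Fintype.card_fin]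

lemma count_good {k a r : ℕ} (hk : 2 ≤ k) (ha : a ≤ k - 1) (hr1 : 1 ≤ r) (hr2 : r ≤ k - 1)
    (j : ℕ) (hj1 : 1 ≤ j) (hj2 : j ≤ k) :
    #((Finset.powersetCard j (Finset.univ : Finset (Fin k))).filter (Good k a r 0)) =
      k.choose j - (k - a - 1).choose j - (k - r - 1).choose (j - 1) := by
  set T := Finset.powersetCard j (Finset.univ : Finset (Fin k)) with hT
  have hTcard : #T = k.choose j := by
    rw [hT, Finset.card_powersetCard, Finset.card_univ, Fintype.card_fin]
  have hfc : T.filter (Good k a r 0) =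
      T.filter (fun s => ¬((∀ i : Fin k, i ∈ s → (i:ℕ) < k - a - 1) ∨ Pattern k r s)) := by
    apply Finset.filter_congr
    intro s hs
    have hcard : s.card = j := Finset.mem_powersetCard_univ.mp hs
    rw [good_zero_iff hk ha, not_or]
    constructor
    · rintro ⟨_, h2, h3⟩; exact ⟨h2, h3⟩
    · rintro ⟨h2, h3⟩; exact ⟨by omega, h2, h3⟩
  set lowA : Finset (Fin k) := (Finset.range (k - a - 1)).attachFin
    (fun x hx => lt_of_lt_of_le (Finset.mem_range.mp hx) (by omega)) with hlowA
  have hB1 : T.filter (fun s => ∀ i : Fin k, i ∈ s → (i:ℕ) < k - a - 1) =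
      Finset.powersetCard j lowA := by
    ext s
    constructor
    · intro h
      obtain ⟨hsT, hall⟩ := Finset.mem_filter.mp h
      have hcard := Finset.mem_powersetCard_univ.mp hsT
      refine Finset.mem_powersetCard.mpr ⟨fun i hi => ?_, hcard⟩
      rw [hlowA, Finset.mem_attachFin, Finset.mem_range]
      exact hall i hi
    · intro h
      obtain ⟨hsub, hcard⟩ := Finset.mem_powersetCard.mp h
      refine Finset.mem_filter.mpr ⟨Finset.mem_powersetCard_univ.mpr hcard, fun i hi => ?_⟩
      have h2 := hsub hi
      rw [hlowA, Finset.mem_attachFin, Finset.mem_range] at h2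
      exact h2
  have hB1card : #(T.filter (fun s => ∀ i : Fin k, i ∈ s → (i:ℕ) < k - a - 1)) =
      (k - a - 1).choose j := by
    rw [hB1, Finset.card_powersetCard, Finset.card_attachFin, Finset.card_range]
  set last : Fin k := ⟨k - 1, by omega⟩ with hlast
  set lowR : Finset (Fin k) := (Finset.range (k - 1 - r)).attachFin
    (fun x hx => lt_of_lt_of_le (Finset.mem_range.mp hx) (by omega)) with hlowR
  have hlnt : ∀ t ∈ Finset.powersetCard (j - 1) lowR, last ∉ t := by
    intro t ht hmem
    have hsub := (Finset.mem_powersetCard.mp ht).1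
    have h2 := hsub hmem
    rw [hlowR, Finset.mem_attachFin, Finset.mem_range] at h2
    have h3 : k - 1 < k - 1 - r := h2
    omega
  have hB2 : T.filter (Pattern k r) =
      (Finset.powersetCard (j - 1) lowR).image (insert last) := by
    ext s
    constructor
    · intro h
      obtain ⟨hsT, ⟨i0, hi0, hi0v⟩, hall⟩ := Finset.mem_filter.mp h
      have hcard := Finset.mem_powersetCard_univ.mp hsT
      apply Finset.mem_image.mpr
      have hlst : last ∈ s := by
        have he : i0 = last := Fin.ext hi0v
        exact he ▸ hi0
      refine ⟨s.erase last, Finset.mem_powersetCard.mpr ⟨?_, ?_⟩, Finset.insert_erase hlst⟩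
      · intro i hi
        obtain ⟨hne, his⟩ := Finset.mem_erase.mp hi
        rw [hlowR, Finset.mem_attachFin, Finset.mem_range]
        rcases hall i his with h | h
        · exact h
        · exact absurd (Fin.ext h : i = last) hne
      · rw [Finset.card_erase_of_mem hlst, hcard]
    · intro h
      obtain ⟨t, ht, rfl⟩ := Finset.mem_image.mp h
      obtain ⟨hsub, hcard⟩ := Finset.mem_powersetCard.mp ht
      have hnt : last ∉ t := by
        intro hmem
        have h2 := hsub hmem
        rw [hlowR, Finset.mem_attachFin, Finset.mem_range] at h2
        have h3 : k - 1 < k - 1 - r := h2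
        omega
      apply Finset.mem_filter.mpr
      constructor
      · apply Finset.mem_powersetCard_univ.mpr
        rw [Finset.card_insert_of_notMem hnt, hcard]; omega
      · refine ⟨⟨last, Finset.mem_insert_self _ _, rfl⟩, ?_⟩
        intro i hi
        rcases Finset.mem_insert.mp hi with rfl | hit
        · right; rfl
        · left
          have h2 := hsub hit
          rw [hlowR, Finset.mem_attachFin, Finset.mem_range] at h2
          exact h2
  have hinj : Set.InjOn (insert last)
      ((Finset.powersetCard (j - 1) lowR : Finset (Finset (Fin k))) :
        Set (Finset (Fin k))) := by
    intro t1 h1 t2 h2 he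
    have e1 := Finset.erase_insert (hlnt t1 (Finset.mem_coe.mp h1))
    have e2 := Finset.erase_insert (hlnt t2 (Finset.mem_coe.mp h2))
    rw [← e1, ← e2, he]
  have hB2card : #(T.filter (Pattern k r)) = (k - r - 1).choose (j - 1) := by
    rw [hB2, Finset.card_image_of_injOn hinj, Finset.card_powersetCard, Finset.card_attachFin,
      Finset.card_range, show k - 1 - r = k - r - 1 by omega]
  have hdisj : Disjoint (T.filter (fun s => ∀ i : Fin k, i ∈ s → (i:ℕ) < k - a - 1))
      (T.filter (Pattern k r)) := by
    rw [Finset.disjoint_left]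
    rintro s h1 h2
    obtain ⟨_, hall⟩ := Finset.mem_filter.mp h1
    obtain ⟨_, ⟨i0, hi0, hi0v⟩, _⟩ := Finset.mem_filter.mp h2
    have := hall i0 hi0
    omega
  have hsplit := Finset.card_filter_add_card_filter_not
    (s := T) (p := fun s => (∀ i : Fin k, i ∈ s → (i:ℕ) < k - a - 1) ∨ Pattern k r s)
  rw [Finset.filter_or, Finset.card_union_of_disjoint hdisj, hB1card, hB2card, hTcard] at hsplit
  rw [hfc]
  omega

theorem fine_recursion' (k a r : ℕ) (hk : 2 ≤ k) (ha : a ≤ k - 1)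
    (hr1 : 1 ≤ r) (hr2 : r ≤ k - 1) (n : ℕ) (hn : 1 ≤ n) :
    (∀ m : ℕ, 1 ≤ m →
      F k a r n m = ∑ j ∈ Finset.range (k + 1), k.choose j * F k a r (n - 1) (m - 1 + j)) ∧
    F k a r n 0 =
      ∑ j ∈ Finset.Icc 1 k,
        (k.choose j - (k - a - 1).choose j - (k - r - 1).choose (j - 1)) *
          F k a r (n - 1) (j - 1) := by
  obtain ⟨n', rfl⟩ : ∃ n', n = n' + 1 := ⟨n - 1, by omega⟩
  simp only [Nat.add_sub_cancel]
  have hdecomp : ∀ m : ℕ, F k a r (n' + 1) m =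
      ∑ s : Finset (Fin k), (if Good k a r m s then F k a r n' (m + s.card - 1) else 0) := by
    intro m
    have h2 := decomp (k := k) (show 1 ≤ k by omega) (k * n')
      (fun L => L ∈ DyckSet k a (n' + 1) m ∧ ¬ HasHill k r L)
    rw [F_eq, show k * (n' + 1) = k * n' + k by ring]
    rw [Finset.filter_congr_decidable] at h2 ⊢
    refine h2.trans ?_
    apply Finset.sum_congr rfl
    intro s _
    by_cases hg : Good k a r m s
    · rw [if_pos hg, F_eq]
      congr 1
      ext P
      simp only [Finset.mem_filter]
      constructor
      · rintro ⟨hP, hc⟩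
        exact ⟨hP, ((key hk ha hr1 hr2 n' m s P hP).mp hc).2⟩
      · rintro ⟨hP, hc⟩
        exact ⟨hP, (key hk ha hr1 hr2 n' m s P hP).mpr ⟨hg, hc⟩⟩
    · rw [if_neg hg, Finset.card_eq_zero, Finset.eq_empty_iff_forall_notMem]
      intro P hP
      simp only [Finset.mem_filter] at hP
      obtain ⟨hP1, hc⟩ := hP
      exact hg ((key hk ha hr1 hr2 n' m s P hP1).mp hc).1
  constructor
  · intro m hm
    rw [hdecomp m]
    have step : ∀ s ∈ (Finset.univ : Finset (Finset (Fin k))),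
        (if Good k a r m s then F k a r n' (m + s.card - 1) else 0)
          = F k a r n' (m - 1 + s.card) := by
      intro s _
      rw [if_pos (good_of_pos m hm s), show m + s.card - 1 = m - 1 + s.card by omega]
    rw [Finset.sum_congr rfl step, sum_finsets k (fun s => F k a r n' (m - 1 + s.card))]
    apply Finset.sum_congr rfl
    intro j hj
    have hcongr : ∀ s ∈ Finset.powersetCard j (Finset.univ : Finset (Fin k)),
        F k a r n' (m - 1 + s.card) = F k a r n' (m - 1 + j) := fun s hs => by
      rw [Finset.mem_powersetCard_univ.mp hs]
    rw [Finset.sum_congr rfl hcongr, Finset.sum_const, Finset.card_powersetCard,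
      Finset.card_univ, Fintype.card_fin, smul_eq_mul]
  · rw [hdecomp 0]
    rw [sum_finsets k (fun s => if Good k a r 0 s then F k a r n' (0 + s.card - 1) else 0)]
    have hstep : ∀ j ∈ Finset.range (k + 1),
        (∑ s ∈ Finset.powersetCard j (Finset.univ : Finset (Fin k)),
          (if Good k a r 0 s then F k a r n' (0 + s.card - 1) else 0)) =
        #((Finset.powersetCard j (Finset.univ : Finset (Fin k))).filter (Good k a r 0)) *
          F k a r n' (j - 1) := by
      intro j hj
      rw [← Finset.sum_filter]
      have hcongr : ∀ s ∈ (Finset.powersetCard j (Finset.univ : Finset (Fin k))).filter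
          (Good k a r 0), F k a r n' (0 + s.card - 1) = F k a r n' (j - 1) := by
        intro s hs
        have hc := Finset.mem_powersetCard_univ.mp (Finset.mem_of_mem_filter s hs)
        rw [show 0 + s.card - 1 = s.card - 1 by omega, hc]
      rw [Finset.sum_congr rfl hcongr, Finset.sum_const, smul_eq_mul]
    rw [Finset.sum_congr rfl hstep]
    have h0 : Finset.range (k + 1) = insert 0 (Finset.Icc 1 k) := by
      ext x
      simp only [Finset.mem_range, Finset.mem_insert, Finset.mem_Icc]
      omega
    rw [h0, Finset.sum_insert (by simp)]
    have hz : #((Finset.powersetCard 0 (Finset.univ : Finset (Fin k))).filter (Good k a r 0))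
        = 0 := by
      rw [Finset.card_eq_zero, Finset.filter_eq_empty_iff]
      intro s hs
      have hc : s.card = 0 := Finset.mem_powersetCard_univ.mp hs
      rintro ⟨h1, _, _⟩
      omega
    rw [hz, Nat.zero_mul, Nat.zero_add]
    apply Finset.sum_congr rfl
    intro j hj
    rw [count_good hk ha hr1 hr2 j (Finset.mem_Icc.mp hj).1 (Finset.mem_Icc.mp hj).2]

end FineAux

/-- Recursion for generalized `(k,r)`-Fine paths of depth `a`. -/
theorem fine_recursion (k a r : ℕ) (hk : 2 ≤ k) (ha : a ≤ k - 1)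
    (hr1 : 1 ≤ r) (hr2 : r ≤ k - 1) (n : ℕ) (hn : 1 ≤ n) :
    (∀ m : ℕ, 1 ≤ m →
      F k a r n m = ∑ j ∈ Finset.range (k + 1), k.choose j * F k a r (n - 1) (m - 1 + j)) ∧
    F k a r n 0 =
      ∑ j ∈ Finset.Icc 1 k,
        (k.choose j - (k - a - 1).choose j - (k - r - 1).choose (j - 1)) *
          F k a r (n - 1) (j - 1) := by
  exact FineAux.fine_recursion' k a r hk ha hr1 hr2 n hn
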